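/- Let (y₁,y₂) : [0,T) → (0,∞)² be a differentiable solution of the ODE system with y₁(0) > 0 and y₂(0) > 1. Assume a₁ > 0 and a₂ = 0, and suppose c > 0 is a constant such that y₁(t)^{a₁} ≥ c·(h₁(t)/h₂(t))·log(y₂(t)) for all t ∈ [0,T). Then for every t ∈ [0,T): c^{p₂₁/a₁}·∫₀ᵗ h₂(s)·(h₁(s)/h₂(s))^{p₂₁/a₁} ds < ∫_{y₂(0)}^{∞} ds/(s^{p₂₂}·(log s)^{p₂₁/a₁}), where the improper integral on the right may be infinite. (In particular, if the right-hand side is finite, T is bounded above whenever the left-hand side, as a function of its upper limit, eventually exceeds it.) -/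

import Mathlib

open MeasureTheory Set

/-- Theorem 1.3(b.1) of the paper. With `a₁ = p₂₁-p₁₁+1 > 0`,
`a₂ = p₁₂-p₂₂+1 = 0`, `y₂(0) > 1`, and a constant `c > 0` with
`y₁^{a₁} ≥ c (h₁/h₂) log y₂` on `[0,T)`, one has, for every `t ∈ [0,T)`,
`c^{p₂₁/a₁} ∫₀ᵗ h₂(s)(h₁(s)/h₂(s))^{p₂₁/a₁} ds <
  ∫_{y₂(0)}^{∞} ds/(s^{p₂₂}(log s)^{p₂₁/a₁})`, where the improper integral on
the right, taken as a Lebesgue integral with values in `[0,∞]`, may be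
infinite. -/
theorem statement15 (p11 p12 p21 p22 : ℝ)
    (hp11 : 0 ≤ p11) (hp12 : 0 ≤ p12) (hp21 : 0 ≤ p21) (hp22 : 0 ≤ p22)
    (h1 h2 : ℝ → ℝ)
    (hh1c : ContinuousOn h1 (Set.Ici 0)) (hh2c : ContinuousOn h2 (Set.Ici 0))
    (hh1p : ∀ t : ℝ, 0 ≤ t → 0 < h1 t) (hh2p : ∀ t : ℝ, 0 ≤ t → 0 < h2 t)
    (T : ℝ) (hT : 0 < T)
    (y1 y2 : ℝ → ℝ)
    (hy1pos : ∀ t ∈ Set.Ico (0:ℝ) T, 0 < y1 t)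
    (hy2pos : ∀ t ∈ Set.Ico (0:ℝ) T, 0 < y2 t)
    (hy10 : 0 < y1 0) (hy20 : 1 < y2 0)
    (hy1d : ∀ t ∈ Set.Ico (0:ℝ) T,
      HasDerivWithinAt y1 (h1 t * y1 t ^ p11 * y2 t ^ p12) (Set.Ico 0 T) t)
    (hy2d : ∀ t ∈ Set.Ico (0:ℝ) T,
      HasDerivWithinAt y2 (h2 t * y2 t ^ p22 * y1 t ^ p21) (Set.Ico 0 T) t)
    (ha1 : 0 < p21 - p11 + 1) (ha2 : p12 - p22 + 1 = 0)
    (c : ℝ) (hc : 0 < c)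
    (hbound : ∀ t ∈ Set.Ico (0:ℝ) T,
      c * (h1 t / h2 t) * Real.log (y2 t) ≤ y1 t ^ (p21 - p11 + 1)) :
    ∀ t ∈ Set.Ico (0:ℝ) T,
      ENNReal.ofReal (c ^ (p21 / (p21 - p11 + 1)) *
          ∫ s in (0:ℝ)..t, h2 s * (h1 s / h2 s) ^ (p21 / (p21 - p11 + 1))) <
        ∫⁻ s in Set.Ioi (y2 0),
          ENNReal.ofReal
            (1 / (s ^ p22 * Real.log s ^ (p21 / (p21 - p11 + 1)))) := by
  set q : ℝ := p21 / (p21 - p11 + 1) with hqdef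
  have hq : 0 ≤ q := div_nonneg hp21 ha1.le
  have ha1' : (p21 - p11 + 1) ≠ 0 := ne_of_gt ha1
  have ha1q : (p21 - p11 + 1) * q = p21 := by rw [hqdef]; field_simp
  set φ : ℝ → ℝ := fun s => 1 / (s ^ p22 * Real.log s ^ q) with hφdef
  set g : ℝ → ℝ := fun s => c ^ q * (h2 s * (h1 s / h2 s) ^ q) with hgdef
  -- continuity of φ on (1, ∞)
  have hφc : ContinuousOn φ (Set.Ioi 1) := by
    intro s hs
    have hs1 : (1:ℝ) < s := hs
    have hs0 : (0:ℝ) < s := lt_trans one_pos hs1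
    have hls : 0 < Real.log s := Real.log_pos hs1
    apply ContinuousAt.continuousWithinAt
    have c1 : ContinuousAt (fun x : ℝ => x ^ p22) s :=
      Real.continuousAt_rpow_const s p22 (Or.inl hs0.ne')
    have c2 : ContinuousAt (fun x : ℝ => Real.log x ^ q) s :=
      (Real.continuousAt_log hs0.ne').rpow_const (Or.inl hls.ne')
    have hden : s ^ p22 * Real.log s ^ q ≠ 0 :=
      (mul_pos (Real.rpow_pos_of_pos hs0 _) (Real.rpow_pos_of_pos hls _)).ne'
    exact continuousAt_const.div (c1.mul c2) hden
  have hφpos : ∀ s : ℝ, 1 < s → 0 < φ s := by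
    intro s hs
    have hs0 : (0:ℝ) < s := lt_trans one_pos hs
    have hls : 0 < Real.log s := Real.log_pos hs
    exact one_div_pos.2 (mul_pos (Real.rpow_pos_of_pos hs0 _) (Real.rpow_pos_of_pos hls _))
  -- continuity of g on [0, ∞)
  have hgc : ContinuousOn g (Set.Ici 0) := by
    apply continuousOn_const.mul
    apply hh2c.mul
    exact (hh1c.div hh2c (fun x hx => (hh2p x hx).ne')).rpow_const (fun x _ => Or.inr hq)
  -- monotonicity of y2
  have hy2cont : ContinuousOn y2 (Set.Ico 0 T) := fun x hx => (hy2d x hx).continuousWithinAt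
  have hy2mono : MonotoneOn y2 (Set.Ico 0 T) := by
    apply monotoneOn_of_hasDerivWithinAt_nonneg (convex_Ico 0 T) hy2cont
      (f' := fun x => h2 x * y2 x ^ p22 * y1 x ^ p21)
    · intro x hx
      exact ((hy2d x (interior_subset hx)).mono interior_subset)
    · intro x hx
      have hx' := interior_subset hx
      have := mul_pos (mul_pos (hh2p x hx'.1) (Real.rpow_pos_of_pos (hy2pos x hx') p22))
        (Real.rpow_pos_of_pos (hy1pos x hx') p21)
      exact this.le
  have h0mem : (0:ℝ) ∈ Set.Ico (0:ℝ) T := ⟨le_rfl, hT⟩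
  have hy2gt1 : ∀ r ∈ Set.Ico (0:ℝ) T, 1 < y2 r :=
    fun r hr => lt_of_lt_of_le hy20 (hy2mono h0mem hr hr.1)
  intro t ht
  have ht0 : 0 ≤ t := ht.1
  have htT : t < T := ht.2
  have hsub : Set.Icc (0:ℝ) t ⊆ Set.Ico 0 T :=
    fun x hx => ⟨hx.1, lt_of_le_of_lt hx.2 htT⟩
  set Φ : ℝ → ℝ := fun u => ∫ s in (y2 0)..u, φ s with hΦdef
  -- the derivative candidate for ψ := Φ ∘ y2 - ∫ g
  set D : ℝ → ℝ := fun r => φ (y2 r) * (h2 r * y2 r ^ p22 * y1 r ^ p21) - g r with hDdef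
  set ψ : ℝ → ℝ := fun r => Φ (y2 r) - ∫ s in (0:ℝ)..r, g s with hψdef
  have hψd : ∀ r ∈ Set.Icc (0:ℝ) t, HasDerivWithinAt ψ (D r) (Set.Icc 0 t) r := by
    intro r hr
    have hrT : r ∈ Set.Ico (0:ℝ) T := hsub hr
    have h1r : 1 < y2 r := hy2gt1 r hrT
    have hler : y2 0 ≤ y2 r := hy2mono h0mem hrT hrT.1
    have hIcc : Set.Icc (y2 0) (y2 r) ⊆ Set.Ioi 1 :=
      fun s hs => lt_of_lt_of_le hy20 hs.1
    have hint : IntervalIntegrable φ volume (y2 0) (y2 r) := by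
      apply ContinuousOn.intervalIntegrable
      rw [Set.uIcc_of_le hler]
      exact hφc.mono hIcc
    have hΦd : HasDerivAt Φ (φ (y2 r)) (y2 r) :=
      intervalIntegral.integral_hasDerivAt_right hint
        (hφc.stronglyMeasurableAtFilter isOpen_Ioi (y2 r) h1r)
        ((hφc (y2 r) h1r).continuousAt (Ioi_mem_nhds h1r))
    have hy2r : HasDerivWithinAt y2 (h2 r * y2 r ^ p22 * y1 r ^ p21) (Set.Icc 0 t) r :=
      (hy2d r hrT).mono hsub
    have hcomp : HasDerivWithinAt (fun x => Φ (y2 x))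
        (φ (y2 r) * (h2 r * y2 r ^ p22 * y1 r ^ p21)) (Set.Icc 0 t) r :=
      hΦd.comp_hasDerivWithinAt r hy2r
    haveI : Fact (r ∈ Set.Icc (0:ℝ) t) := ⟨hr⟩
    have hgcont : ContinuousOn g (Set.Icc 0 t) :=
      hgc.mono (fun x hx => hx.1)
    have hgint : IntervalIntegrable g volume 0 r := by
      apply ContinuousOn.intervalIntegrable
      rw [Set.uIcc_of_le hr.1]
      exact hgc.mono (fun x hx => hx.1)
    have hgd : HasDerivWithinAt (fun u => ∫ s in (0:ℝ)..u, g s) (g r) (Set.Icc 0 t) r :=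
      intervalIntegral.integral_hasDerivWithinAt_right hgint
        (hgcont.stronglyMeasurableAtFilter_nhdsWithin measurableSet_Icc r)
        (hgcont r hr)
    exact hcomp.sub hgd
  have hDnn : ∀ r ∈ Set.Icc (0:ℝ) t, 0 ≤ D r := by
    intro r hr
    have hrT : r ∈ Set.Ico (0:ℝ) T := hsub hr
    have h1r : 1 < y2 r := hy2gt1 r hrT
    have hy2r0 : 0 < y2 r := lt_trans one_pos h1r
    have hlog : 0 < Real.log (y2 r) := Real.log_pos h1r
    have hA : 0 < y2 r ^ p22 := Real.rpow_pos_of_pos hy2r0 _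
    have hL : 0 < Real.log (y2 r) ^ q := Real.rpow_pos_of_pos hlog _
    have hy1r : 0 < y1 r := hy1pos r hrT
    have hh2r : 0 < h2 r := hh2p r hr.1
    have hh1r : 0 < h1 r := hh1p r hr.1
    have hdiv : 0 < h1 r / h2 r := div_pos hh1r hh2r
    -- key inequality
    have key : c ^ q * (h1 r / h2 r) ^ q * Real.log (y2 r) ^ q ≤ y1 r ^ p21 := by
      have hb := hbound r hrT
      calc c ^ q * (h1 r / h2 r) ^ q * Real.log (y2 r) ^ q
          = (c * (h1 r / h2 r) * Real.log (y2 r)) ^ q := by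
            rw [Real.mul_rpow (mul_nonneg hc.le hdiv.le) hlog.le,
              Real.mul_rpow hc.le hdiv.le]
        _ ≤ (y1 r ^ (p21 - p11 + 1)) ^ q := by
            apply Real.rpow_le_rpow _ hb hq
            positivity
        _ = y1 r ^ p21 := by
            rw [← Real.rpow_mul hy1r.le, ha1q]
    have heq : φ (y2 r) * (h2 r * y2 r ^ p22 * y1 r ^ p21)
        = h2 r * y1 r ^ p21 / Real.log (y2 r) ^ q := by
      rw [hφdef]
      field_simp
    rw [hDdef]
    simp only [sub_nonneg]
    rw [heq, hgdef, le_div_iff₀ hL]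
    have h' : c ^ q * (h2 r * (h1 r / h2 r) ^ q) * Real.log (y2 r) ^ q
        = h2 r * (c ^ q * (h1 r / h2 r) ^ q * Real.log (y2 r) ^ q) := by ring
    rw [h']
    exact mul_le_mul_of_nonneg_left key hh2r.le
  have hmono : MonotoneOn ψ (Set.Icc 0 t) := by
    apply monotoneOn_of_hasDerivWithinAt_nonneg (convex_Icc 0 t)
      (fun r hr => (hψd r hr).continuousWithinAt)
      (f' := D)
    · intro r hr
      exact (hψd r (interior_subset hr)).mono interior_subset
    · intro r hr
      exact hDnn r (interior_subset hr)
  have hψ0 : ψ 0 = 0 := by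
    simp [hψdef, hΦdef, intervalIntegral.integral_same]
  have hkey : (∫ s in (0:ℝ)..t, g s) ≤ Φ (y2 t) := by
    have h0m : (0:ℝ) ∈ Set.Icc (0:ℝ) t := ⟨le_rfl, ht0⟩
    have htm : t ∈ Set.Icc (0:ℝ) t := ⟨ht0, le_rfl⟩
    have := hmono h0m htm ht0
    rw [hψ0] at this
    have h2' : (0:ℝ) ≤ Φ (y2 t) - ∫ s in (0:ℝ)..t, g s := this
    linarith
  -- now convert to the goal
  have hlet : y2 0 ≤ y2 t := hy2mono h0mem ⟨ht0, htT⟩ ht0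
  have h1t : 1 < y2 t := hy2gt1 t ⟨ht0, htT⟩
  have hintt : IntervalIntegrable φ volume (y2 0) (y2 t) := by
    apply ContinuousOn.intervalIntegrable
    rw [Set.uIcc_of_le hlet]
    exact hφc.mono (fun s hs => lt_of_lt_of_le hy20 hs.1)
  have hΦeq : Φ (y2 t) = ∫ s in Set.Ioc (y2 0) (y2 t), φ s := by
    rw [hΦdef]
    exact intervalIntegral.integral_of_le hlet
  have hofReal : ENNReal.ofReal (∫ s in Set.Ioc (y2 0) (y2 t), φ s)
      = ∫⁻ s in Set.Ioc (y2 0) (y2 t), ENNReal.ofReal (φ s) := by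
    apply MeasureTheory.ofReal_integral_eq_lintegral_ofReal hintt.1
    refine (ae_restrict_iff' measurableSet_Ioc).2 (Filter.Eventually.of_forall ?_)
    intro s hs
    exact (hφpos s (lt_of_lt_of_le hy20 hs.1.le)).le
  -- positivity of the tail
  have htail : (∫⁻ s in Set.Ioi (y2 t), ENNReal.ofReal (φ s)) ≠ 0 := by
    set b := y2 t
    have hb1 : (1:ℝ) < b := h1t
    have hεpos : 0 < φ (b + 1) := hφpos _ (by linarith)
    have hlow : ∫⁻ s in Set.Ioc b (b + 1), ENNReal.ofReal (φ (b + 1))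
        ≤ ∫⁻ s in Set.Ioc b (b + 1), ENNReal.ofReal (φ s) := by
      apply lintegral_mono_ae
      refine (ae_restrict_iff' measurableSet_Ioc).2 (Filter.Eventually.of_forall ?_)
      intro s hs
      apply ENNReal.ofReal_le_ofReal
      have hs1 : 1 < s := lt_trans hb1 hs.1
      have hs0 : (0:ℝ) < s := lt_trans one_pos hs1
      have hb0 : (0:ℝ) < b + 1 := by linarith
      have hd1 : s ^ p22 ≤ (b + 1) ^ p22 := Real.rpow_le_rpow hs0.le hs.2 hp22
      have hd2 : Real.log s ^ q ≤ Real.log (b + 1) ^ q :=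
        Real.rpow_le_rpow (Real.log_nonneg hs1.le) (Real.log_le_log hs0 hs.2) hq
      have hden : 0 < s ^ p22 * Real.log s ^ q :=
        mul_pos (Real.rpow_pos_of_pos hs0 _) (Real.rpow_pos_of_pos (Real.log_pos hs1) _)
      apply one_div_le_one_div_of_le hden
      apply mul_le_mul hd1 hd2 (Real.rpow_nonneg (Real.log_nonneg hs1.le) _)
        (Real.rpow_nonneg hb0.le _)
    have hconst : (∫⁻ _ in Set.Ioc b (b + 1), ENNReal.ofReal (φ (b + 1)))
        = ENNReal.ofReal (φ (b + 1)) := by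
      rw [setLIntegral_const, Real.volume_Ioc]
      simp
    intro h0
    have hle2 : (∫⁻ s in Set.Ioc b (b + 1), ENNReal.ofReal (φ s))
        ≤ ∫⁻ s in Set.Ioi b, ENNReal.ofReal (φ s) :=
      lintegral_mono_set (fun s hs => hs.1)
    rw [h0] at hle2
    have := le_trans hlow hle2
    rw [hconst] at this
    simp only [le_zero_iff, ENNReal.ofReal_eq_zero] at this
    linarith
  -- finish
  have hLHS : ENNReal.ofReal (c ^ q * ∫ s in (0:ℝ)..t, h2 s * (h1 s / h2 s) ^ q)
      = ENNReal.ofReal (∫ s in (0:ℝ)..t, g s) := by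
    rw [hgdef, intervalIntegral.integral_const_mul]
  calc ENNReal.ofReal (c ^ q * ∫ s in (0:ℝ)..t, h2 s * (h1 s / h2 s) ^ q)
      = ENNReal.ofReal (∫ s in (0:ℝ)..t, g s) := hLHS
    _ ≤ ENNReal.ofReal (Φ (y2 t)) := ENNReal.ofReal_le_ofReal hkey
    _ = ∫⁻ s in Set.Ioc (y2 0) (y2 t), ENNReal.ofReal (φ s) := by rw [hΦeq, hofReal]
    _ < (∫⁻ s in Set.Ioc (y2 0) (y2 t), ENNReal.ofReal (φ s))
        + ∫⁻ s in Set.Ioi (y2 t), ENNReal.ofReal (φ s) := by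
        apply ENNReal.lt_add_right _ htail
        rw [← hofReal]
        exact ENNReal.ofReal_ne_top
    _ = ∫⁻ s in Set.Ioi (y2 0), ENNReal.ofReal (φ s) := by
        rw [← lintegral_union measurableSet_Ioi (Set.Ioc_disjoint_Ioi le_rfl),
          Set.Ioc_union_Ioi_eq_Ioi hlet]
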